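/- The left-hand difference quotient of γ at 1 along the real axis diverges to +∞: lim_{t→1⁻} (γ(1) − γ(t))/(1 − t) = +∞, where γ(z) = ∑_{n=1}^∞ z^{n-1}(1/n − log((n+1)/n)). -/

import Mathlib

open Filter Topology

noncomputable def aa : ℕ → ℝ :=
  fun n => 1 / ((n : ℝ) + 1) - Real.log (((n : ℝ) + 2) / ((n : ℝ) + 1))

lemma log_ge (x : ℝ) (h0 : 0 < x) : x / (1 + x) ≤ Real.log (1 + x) := by
  have hx1 : (0:ℝ) < 1 + x := by linarith
  have h := Real.log_le_sub_one_of_pos (show (0:ℝ) < (1+x)⁻¹ by positivity)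
  rw [Real.log_inv] at h
  have h2 : (1+x)⁻¹ - 1 = -(x/(1+x)) := by field_simp; ring
  rw [h2] at h
  linarith

lemma key_lb (x : ℝ) (h0 : 0 < x) (h1 : x ≤ 1) : x^2/9 ≤ x - Real.log (1+x) := by
  set s := Real.sqrt (1+x) with hs
  have hx1 : (0:ℝ) < 1 + x := by linarith
  have hs2 : s^2 = 1 + x := Real.sq_sqrt (le_of_lt hx1)
  have hs0 : 0 < s := Real.sqrt_pos.mpr hx1
  have hlog : Real.log (1+x) = 2 * Real.log s := by
    rw [← hs2, Real.log_pow]; push_cast; ring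
  have hls : Real.log s ≤ s - 1 := Real.log_le_sub_one_of_pos hs0
  have hsle : s ≤ 3/2 := by
    rw [hs]
    calc Real.sqrt (1+x) ≤ Real.sqrt ((3/2)^2) := Real.sqrt_le_sqrt (by nlinarith)
      _ = 3/2 := Real.sqrt_sq (by norm_num)
  rw [hlog]
  nlinarith [sq_nonneg (s - 1), sq_nonneg (s + 1), mul_nonneg (sq_nonneg (s-1)) (sub_nonneg.mpr hsle)]

lemma key_ub (x : ℝ) (h0 : 0 < x) : x - Real.log (1+x) ≤ x^2 := by
  have h := log_ge x h0
  have hx1 : (0:ℝ) < 1 + x := by linarith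
  have h3 : x - x/(1+x) = x^2/(1+x) := by field_simp; ring
  have h4 : x^2/(1+x) ≤ x^2 := by
    apply div_le_self (sq_nonneg x) (by linarith)
  linarith

lemma frac_eq (n : ℕ) : ((n:ℝ) + 2) / ((n:ℝ) + 1) = 1 + 1 / ((n:ℝ) + 1) := by
  have h : ((n:ℝ) + 1) ≠ 0 := by positivity
  field_simp
  ring

lemma aa_lb (n : ℕ) : 1 / (9 * ((n:ℝ)+1)^2) ≤ aa n := by
  have h1 : (0:ℝ) < (n:ℝ) + 1 := by positivity
  have hx0 : 0 < 1/((n:ℝ)+1) := by positivity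
  have hx1 : 1/((n:ℝ)+1) ≤ 1 := by rw [div_le_one h1]; linarith
  have hk := key_lb _ hx0 hx1
  unfold aa
  rw [frac_eq]
  have hne : ((n:ℝ)+1) ≠ 0 := by positivity
  have : (1/((n:ℝ)+1))^2/9 = 1 / (9 * ((n:ℝ)+1)^2) := by
    field_simp
  linarith [this ▸ hk]

lemma aa_nonneg (n : ℕ) : 0 ≤ aa n :=
  le_trans (by positivity) (aa_lb n)

lemma aa_ub (n : ℕ) : aa n ≤ 1 / ((n:ℝ)+1)^2 := by
  have h1 : (0:ℝ) < (n:ℝ) + 1 := by positivity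
  have hx0 : 0 < 1/((n:ℝ)+1) := by positivity
  have hk := key_ub _ hx0
  unfold aa
  rw [frac_eq]
  have : (1/((n:ℝ)+1))^2 = 1 / ((n:ℝ)+1)^2 := by
    rw [div_pow, one_pow]
  linarith [this ▸ hk]

lemma summable_sq : Summable (fun n : ℕ => 1 / ((n:ℝ)+1)^2) := by
  have h : Summable (fun n : ℕ => 1 / ((n:ℝ))^2) := by
    simpa using Real.summable_one_div_nat_pow.mpr (by norm_num : 1 < 2)
  have := (summable_nat_add_iff 1).mpr h
  apply this.congr
  intro n
  push_cast
  ring_nf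

lemma summable_aa : Summable aa :=
  Summable.of_nonneg_of_le aa_nonneg aa_ub summable_sq

lemma harm_le (N : ℕ) :
    (∑ i ∈ Finset.range N, (1 / ((i:ℝ) + 1)))
      ≤ 1 + 18 * ∑ n ∈ Finset.range N, (n:ℝ) * aa n := by
  induction N with
  | zero => simp
  | succ N ih =>
    rw [Finset.sum_range_succ, Finset.sum_range_succ]
    rcases Nat.eq_zero_or_pos N with h | h
    · subst h; simp
    · have hb := aa_lb N
      have h1 : (1:ℝ) ≤ (N:ℝ) := by exact_mod_cast h
      have hpos : (0:ℝ) < (N:ℝ) + 1 := by positivity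
      have hb' : 1 ≤ aa N * (9 * ((N:ℝ)+1)^2) := by
        rw [← div_le_iff₀ (by positivity)]
        exact hb
      have hstep : 1/((N:ℝ)+1) ≤ 18 * ((N:ℝ) * aa N) := by
        rw [div_le_iff₀ hpos]
        nlinarith [hb', h1, aa_nonneg N]
      linarith

/-- `lim_{t→1⁻} (γ(1) − γ(t))/(1 − t) = +∞`. -/
theorem stmt_10 :
    Tendsto
      (fun t : ℝ =>
        ((∑' n : ℕ, (1 : ℝ) ^ n * (1 / (n + 1) - Real.log ((n + 2) / (n + 1))))
          - ∑' n : ℕ, t ^ n * (1 / (n + 1) - Real.log ((n + 2) / (n + 1)))) / (1 - t))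
      (nhdsWithin 1 (Set.Iio 1)) atTop := by
  rw [tendsto_atTop]
  intro b
  obtain ⟨N, hN⟩ :=
    (Real.tendsto_sum_range_one_div_nat_succ_atTop.eventually_ge_atTop
      (18*(b+1)+1)).exists
  have hSN : b + 1 ≤ ∑ n ∈ Finset.range N, (n:ℝ) * aa n := by
    have h := harm_le N
    have hN' : 18*(b+1)+1 ≤ ∑ i ∈ Finset.range N, (1 / ((i:ℝ) + 1)) := by
      convert hN using 2 with i
    linarith
  set g : ℝ → ℝ := fun t => ∑ n ∈ Finset.range N, aa n * ∑ k ∈ Finset.range n, t^k with hg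
  have hg1 : g 1 = ∑ n ∈ Finset.range N, (n:ℝ) * aa n := by
    simp [hg, mul_comm]
  have hgc : Continuous g := by
    apply continuous_finset_sum
    intro n _
    exact continuous_const.mul (continuous_finset_sum _ fun k _ => continuous_pow k)
  have hev : ∀ᶠ t in 𝓝 (1:ℝ), b < g t := by
    have hlt : b < g 1 := by rw [hg1]; linarith
    exact hgc.continuousAt.eventually_const_lt hlt
  have hIoo : Set.Ioo (0:ℝ) 1 ∈ 𝓝[<] (1:ℝ) :=
    Ioo_mem_nhdsLT_of_mem (by norm_num)
  filter_upwards [hIoo, nhdsWithin_le_nhds hev] with t ht hbt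
  obtain ⟨ht0, ht1⟩ := ht
  have hsum1 : Summable aa := summable_aa
  have hsum2 : Summable (fun n : ℕ => t^n * aa n) := by
    apply Summable.of_nonneg_of_le
      (fun n => mul_nonneg (pow_nonneg ht0.le n) (aa_nonneg n))
      (fun n => mul_le_of_le_one_left (aa_nonneg n) (pow_le_one₀ ht0.le ht1.le))
      hsum1
  have hT1 : (∑' n : ℕ, (1 : ℝ) ^ n * (1 / ((n:ℝ) + 1) - Real.log (((n:ℝ) + 2) / ((n:ℝ) + 1))))
      = ∑' n, aa n := by
    simp [aa]
  have hT2 : (∑' n : ℕ, t ^ n * (1 / ((n:ℝ) + 1) - Real.log (((n:ℝ) + 2) / ((n:ℝ) + 1))))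
      = ∑' n, t^n * aa n := rfl
  have heq : ∑ n ∈ Finset.range N, (aa n - t^n * aa n) = (1-t) * g t := by
    rw [hg]
    rw [Finset.mul_sum]
    apply Finset.sum_congr rfl
    intro n _
    have hgs : (1-t) * ∑ k ∈ Finset.range n, t^k = 1 - t^n := by
      linear_combination -(geom_sum_mul t n)
    linear_combination -(aa n * hgs)
  have hnn : ∀ n : ℕ, 0 ≤ aa n - t^n * aa n := by
    intro n
    have : t^n ≤ 1 := pow_le_one₀ ht0.le ht1.le
    nlinarith [aa_nonneg n]
  have hpart : ∑ n ∈ Finset.range N, (aa n - t^n * aa n)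
      ≤ ∑' n, (aa n - t^n * aa n) :=
    Summable.sum_le_tsum _ (fun n _ => hnn n) (hsum1.sub hsum2)
  rw [hT1, hT2, ← Summable.tsum_sub hsum1 hsum2, le_div_iff₀ (by linarith : (0:ℝ) < 1 - t)]
  calc b * (1-t) ≤ g t * (1-t) := by nlinarith
    _ = (1-t) * g t := mul_comm _ _
    _ = ∑ n ∈ Finset.range N, (aa n - t^n * aa n) := heq.symm
    _ ≤ ∑' n, (aa n - t^n * aa n) := hpart
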